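/- Let $K$ be an imaginary quadratic field, $\mathcal{A}$ an ideal class, $\mathcal{D}_1, \mathcal{D}_2$ the ideals of norms $|D_1|, |D_2|$ for a factorization $D = D_1 D_2$ of the discriminant, and $\chi$ an unramified Hecke character of infinity type $(\ell, 0)$. Then for every integer $j \geq 1$: $r_{\mathcal{A}\mathcal{D}_1^{-1},\chi}(j) = \chi(\mathcal{D}_2)^{-1} \cdot r_{\mathcal{A},\chi}(j|D_2|)$, where $r_{\mathcal{B},\chi}(t) = \sum_{\mathfrak{b} \in \mathcal{B},\, \mathfrak{b} \subset \mathcal{O}_K,\, N\mathfrak{b} = t} \chi(\mathfrak{b})$. -/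

import Mathlib

open NumberField Ideal
open scoped nonZeroDivisors
open UniqueFactorizationMonoid



private theorem aux_basis (K : Type*) [Field K] [NumberField K]
    (h2 : Module.finrank ℚ K = 2) :
    ∃ (ω : 𝓞 K) (t n : ℤ),
      (∀ x : 𝓞 K, ∃ a b : ℤ, x = (a : 𝓞 K) + (b : 𝓞 K) * ω) ∧
      ω * ω = (n : 𝓞 K) + (t : 𝓞 K) * ω ∧
      NumberField.discr K = t ^ 2 + 4 * n := by
  classical
  have hrk : Module.finrank ℤ (𝓞 K) = 2 := by
    rw [NumberField.RingOfIntegers.rank, h2]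
  obtain ⟨b₀⟩ : Nonempty (Module.Basis (Fin 2) ℤ (𝓞 K)) :=
    ⟨(Module.finBasis ℤ (𝓞 K)).reindex (finCongr hrk)⟩
  obtain ⟨c0, c1, h1, h10, h11⟩ : ∃ c0 c1 : ℤ, c0 • b₀ 0 + c1 • b₀ 1 = 1 ∧
      b₀.repr 1 0 = c0 ∧ b₀.repr 1 1 = c1 := by
    refine ⟨b₀.repr 1 0, b₀.repr 1 1, ?_, rfl, rfl⟩
    have h := b₀.sum_repr 1
    rwa [Fin.sum_univ_two] at h
  have hcop : IsCoprime c0 c1 := by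
    rw [Int.isCoprime_iff_gcd_eq_one]
    by_contra hg
    obtain ⟨e0, he0⟩ : (Int.gcd c0 c1 : ℤ) ∣ c0 := Int.gcd_dvd_left _ _
    obtain ⟨e1, he1⟩ : (Int.gcd c0 c1 : ℤ) ∣ c1 := Int.gcd_dvd_right _ _
    obtain ⟨g, hgdef⟩ : ∃ g : ℤ, g = (Int.gcd c0 c1 : ℤ) := ⟨_, rfl⟩
    rw [← hgdef] at he0 he1
    have hx : (algebraMap ℤ (𝓞 K)) g * (e0 • b₀ 0 + e1 • b₀ 1) = 1 := by
      rw [← h1, he0, he1]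
      rw [Algebra.smul_def, Algebra.smul_def, Algebra.smul_def, Algebra.smul_def]
      push_cast
      ring
    have hnorm := congrArg (Algebra.norm ℤ) hx
    rw [_root_.map_mul, Algebra.norm_algebraMap_of_basis b₀] at hnorm
    have hN1 : (Algebra.norm ℤ) (1 : 𝓞 K) = 1 := _root_.map_one _
    rw [hN1] at hnorm
    have hcard : g ^ (Fintype.card (Fin 2)) = g * g := by
      rw [show Fintype.card (Fin 2) = 2 by simp]; ring
    rw [hcard] at hnorm
    have hdvd : g ∣ 1 := ⟨g * Algebra.norm ℤ (e0 • b₀ 0 + e1 • b₀ 1), by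
      rw [← hnorm]; ring⟩
    have hg1 : g = 1 ∨ g = -1 := Int.isUnit_iff.mp (isUnit_of_dvd_one hdvd)
    have : Int.gcd c0 c1 = 1 := by omega
    exact hg this
  obtain ⟨u, v, huv⟩ := hcop
  obtain ⟨ω, hωdef⟩ : ∃ ω : 𝓞 K, ω = (-v) • b₀ 0 + u • b₀ 1 := ⟨_, rfl⟩
  have hwrepr : b₀.repr ω = (-v) • Finsupp.single 0 1 + u • Finsupp.single 1 1 := by
    rw [hωdef, map_add, LinearEquiv.map_smul, LinearEquiv.map_smul, b₀.repr_self, b₀.repr_self]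
  have hw0 : b₀.repr ω 0 = -v := by rw [hwrepr]; simp
  have hw1 : b₀.repr ω 1 = u := by rw [hwrepr]; simp
  have hli : LinearIndependent ℤ ![(1 : 𝓞 K), ω] := by
    rw [LinearIndependent.pair_iff]
    intro s r hst
    have h0 := congrArg (fun z => b₀.repr z 0) hst
    have h1' := congrArg (fun z => b₀.repr z 1) hst
    simp only [map_add, map_smul, Finsupp.coe_add, Finsupp.coe_smul, Pi.add_apply,
      Pi.smul_apply, smul_eq_mul, map_zero, Finsupp.coe_zero, Pi.zero_apply,
      hw0, hw1, h10, h11] at h0 h1'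
    constructor
    · linear_combination u * h0 + v * h1' - s * huv
    · linear_combination c0 * h1' - c1 * h0 - r * huv
  have hmem : ∀ x : 𝓞 K, ∃ a b : ℤ, x = (a : 𝓞 K) + (b : 𝓞 K) * ω := by
    intro x
    refine ⟨b₀.repr x 0 * u + b₀.repr x 1 * v, -(b₀.repr x 0) * c1 + b₀.repr x 1 * c0, ?_⟩
    have hx := b₀.sum_repr x
    rw [Fin.sum_univ_two] at hx
    have expand : ((b₀.repr x 0 * u + b₀.repr x 1 * v : ℤ) : 𝓞 K)
        + ((-(b₀.repr x 0) * c1 + b₀.repr x 1 * c0 : ℤ) : 𝓞 K) * ω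
        = (b₀.repr x 0 * u + b₀.repr x 1 * v) • (1 : 𝓞 K)
          + (-(b₀.repr x 0) * c1 + b₀.repr x 1 * c0) • ω := by
      rw [zsmul_eq_mul, zsmul_eq_mul, mul_one]
    rw [expand]
    conv_rhs => rw [← h1, hωdef]
    conv_lhs => rw [← hx]
    match_scalars
    · linear_combination (-b₀.repr x 0 : ℤ) * huv
    · linear_combination (-b₀.repr x 1 : ℤ) * huv
  have hsp : ⊤ ≤ Submodule.span ℤ (Set.range ![(1 : 𝓞 K), ω]) := by
    intro x _
    have hrange : Set.range ![(1 : 𝓞 K), ω] = {(1 : 𝓞 K), ω} := by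
      simp [Matrix.range_cons, Matrix.range_empty, Set.singleton_union, Set.pair_comm]
    rw [hrange, Submodule.mem_span_pair]
    obtain ⟨a, b, hab⟩ := hmem x
    exact ⟨a, b, by rw [hab, zsmul_eq_mul, zsmul_eq_mul, mul_one]⟩
  let b₁ : Module.Basis (Fin 2) ℤ (𝓞 K) := Module.Basis.mk hli hsp
  have hb10 : b₁ 0 = 1 := by simp [b₁, Module.Basis.coe_mk]
  have hb11 : b₁ 1 = ω := by simp [b₁, Module.Basis.coe_mk]
  obtain ⟨n, t, hsum, hn, ht⟩ : ∃ n t : ℤ, n • b₁ 0 + t • b₁ 1 = ω * ω ∧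
      b₁.repr (ω * ω) 0 = n ∧ b₁.repr (ω * ω) 1 = t := by
    refine ⟨b₁.repr (ω * ω) 0, b₁.repr (ω * ω) 1, ?_, rfl, rfl⟩
    have h := b₁.sum_repr (ω * ω)
    rwa [Fin.sum_univ_two] at h
  have hrel : ω * ω = (n : 𝓞 K) + (t : 𝓞 K) * ω := by
    rw [← hsum, hb10, hb11, zsmul_eq_mul, zsmul_eq_mul, mul_one]
  refine ⟨ω, t, n, hmem, hrel, ?_⟩
  -- trace computations
  have htr : ∀ x : 𝓞 K, Algebra.trace ℤ (𝓞 K) x = b₁.repr (x * b₁ 0) 0 + b₁.repr (x * b₁ 1) 1 := by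
    intro x
    rw [Algebra.trace_eq_matrix_trace b₁, Matrix.trace_fin_two,
      Algebra.leftMulMatrix_eq_repr_mul, Algebra.leftMulMatrix_eq_repr_mul]
  have htr1 : Algebra.trace ℤ (𝓞 K) 1 = 2 := by
    rw [htr 1, one_mul, one_mul, b₁.repr_self, b₁.repr_self]
    simp
  have htrω : Algebra.trace ℤ (𝓞 K) ω = t := by
    rw [htr ω, hb10, hb11, mul_one, ht]
    have : b₁.repr ω 0 = 0 := by rw [← hb11, b₁.repr_self]; simp
    rw [this, zero_add]
  have htrω2 : Algebra.trace ℤ (𝓞 K) (ω * ω) = 2 * n + t * t := by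
    have : ω * ω = n • (1 : 𝓞 K) + t • ω := by rw [← hsum, hb10, hb11]
    rw [this, map_add, map_smul, map_smul, htr1, htrω, smul_eq_mul, smul_eq_mul]
    ring
  have hd := NumberField.discr_eq_discr K b₁
  rw [Algebra.discr_def, Matrix.det_fin_two] at hd
  simp only [Algebra.traceMatrix_apply, Algebra.traceForm_apply, hb10, hb11, one_mul, mul_one] at hd
  rw [htr1, htrω, htrω2] at hd
  rw [← hd]
  ring
/-- In any commutative ring, if a prime ideal contains the rational prime `p` and the
integer `z` (as casts), then `p ∣ z`. -/
private theorem aux_intmem {R : Type*} [CommRing R] (P : Ideal R) (hP : P.IsPrime)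
    (p : ℕ) (hp : p.Prime) (hpP : (p : R) ∈ P) {z : ℤ} (hz : ((z : ℤ) : R) ∈ P) :
    (p : ℤ) ∣ z := by
  by_contra hnd
  have hcop : IsCoprime (p : ℤ) z := by
    rw [Int.isCoprime_iff_gcd_eq_one]
    have hg : (Int.gcd (p : ℤ) z : ℤ) ∣ (p : ℤ) := Int.gcd_dvd_left _ _
    have : Int.gcd (p : ℤ) z ∣ p := by
      have := Int.natCast_dvd_natCast.mp (by simpa using hg)
      exact this
    rcases (Nat.Prime.eq_one_or_self_of_dvd hp _ this) with h | h
    · exact h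
    · exfalso
      apply hnd
      have : (Int.gcd (p : ℤ) z : ℤ) ∣ z := Int.gcd_dvd_right _ _
      rwa [h] at this
  obtain ⟨a, b, hab⟩ := hcop
  have : ((a * p + b * z : ℤ) : R) ∈ P := by
    push_cast
    exact add_mem (P.mul_mem_left _ (by exact_mod_cast hpP)) (P.mul_mem_left _ hz)
  rw [hab] at this
  exact hP.ne_top (P.eq_top_iff_one.mpr (by exact_mod_cast this))

private theorem aux_unique (K : Type*) [Field K] [NumberField K]
    (ω : 𝓞 K) (t n : ℤ)
    (hspan : ∀ x : 𝓞 K, ∃ a b : ℤ, x = (a : 𝓞 K) + (b : 𝓞 K) * ω)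
    (hω : ω * ω = (n : 𝓞 K) + (t : 𝓞 K) * ω)
    (p : ℕ) (hp : p.Prime) (hpD : (p : ℤ) ∣ t ^ 2 + 4 * n)
    (P Q : Ideal (𝓞 K)) (hP : P.IsPrime) (hQ : Q.IsPrime)
    (hpP : (p : 𝓞 K) ∈ P) (hpQ : (p : 𝓞 K) ∈ Q) : P = Q := by
  -- the element δ = 2ω - t has δ² = t² + 4n ∈ every prime over p
  obtain ⟨m, hm⟩ := hpD
  have hδ : ∀ R : Ideal (𝓞 K), R.IsPrime → (p : 𝓞 K) ∈ R →
      (2 * ω - (t : 𝓞 K)) ∈ R := by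
    intro R hR hpR
    have hδ2 : (2 * ω - (t : 𝓞 K)) * (2 * ω - (t : 𝓞 K)) = ((p : 𝓞 K)) * ((m : ℤ) : 𝓞 K) := by
      have hcast : ((t ^ 2 + 4 * n : ℤ) : 𝓞 K) = ((p : ℤ) : 𝓞 K) * ((m : ℤ) : 𝓞 K) := by
        rw [← Int.cast_mul, hm]
      push_cast at hcast ⊢
      linear_combination (4 : 𝓞 K) * hω + hcast
    have : (2 * ω - (t : 𝓞 K)) * (2 * ω - (t : 𝓞 K)) ∈ R := by
      rw [hδ2]; exact R.mul_mem_right _ hpR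
    rcases hR.mem_or_mem this with h | h <;> exact h
  -- find c : ℤ with ω - c in every prime over p
  obtain ⟨c, hc⟩ : ∃ c : ℤ, ∀ R : Ideal (𝓞 K), R.IsPrime → (p : 𝓞 K) ∈ R →
      ω - (c : 𝓞 K) ∈ R := by
    rcases eq_or_ne p 2 with h2 | h2
    · -- p = 2 : t is even, use c = -n
      refine ⟨-n, fun R hR hpR => ?_⟩
      have h2R : (2 : 𝓞 K) ∈ R := by
        have : ((2 : ℕ) : 𝓞 K) ∈ R := h2 ▸ hpR
        exact_mod_cast this
      have htR : ((t : ℤ) : 𝓞 K) ∈ R := by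
        have : ((t : ℤ) : 𝓞 K) = 2 * ω - (2 * ω - (t : 𝓞 K)) := by ring
        rw [this]
        exact sub_mem (R.mul_mem_right _ h2R) (hδ R hR hpR)
      have ht2 : (2 : ℤ) ∣ t := by
        have := aux_intmem R hR 2 Nat.prime_two h2R htR
        exact_mod_cast this
      obtain ⟨t', ht'⟩ := ht2
      obtain ⟨k, hk⟩ : Even (n * (n + 1)) := Int.even_mul_succ_self n
      have hcast1 : ((t : ℤ) : 𝓞 K) = 2 * ((t' : ℤ) : 𝓞 K) := by
        rw [ht']; push_cast; ring
      have hcast2 : ((n : ℤ) : 𝓞 K) * ((n : ℤ) : 𝓞 K) + ((n : ℤ) : 𝓞 K)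
          = ((k : ℤ) : 𝓞 K) + ((k : ℤ) : 𝓞 K) := by
        have : (n * (n + 1) : ℤ) = k + k := hk
        have := congrArg (fun z : ℤ => ((z : ℤ) : 𝓞 K)) this
        push_cast at this
        linear_combination this
      have hsq : (ω - ((-n : ℤ) : 𝓞 K)) * (ω - ((-n : ℤ) : 𝓞 K))
          = (2 : 𝓞 K) * (((t' + n : ℤ) : 𝓞 K) * ω + ((k : ℤ) : 𝓞 K)) := by
        push_cast at hcast1 hcast2 ⊢
        linear_combination hω + ω * hcast1 + hcast2
      have hmem2 : (ω - ((-n : ℤ) : 𝓞 K)) * (ω - ((-n : ℤ) : 𝓞 K)) ∈ R := by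
        rw [hsq]
        exact R.mul_mem_right _ h2R
      rcases hR.mem_or_mem hmem2 with h | h <;> exact h
    · -- p odd
      have hgcd : Nat.gcd 2 p = 1 := by
        have hd : Nat.gcd 2 p ∣ 2 := Nat.gcd_dvd_left _ _
        have hd2 : Nat.gcd 2 p ∣ p := Nat.gcd_dvd_right _ _
        rcases (Nat.dvd_prime Nat.prime_two).mp hd with h | h
        · exact h
        · exfalso
          rw [h] at hd2
          rcases (Nat.Prime.eq_one_or_self_of_dvd hp 2 hd2) with h' | h' <;> omega
      have hcop2 : IsCoprime (2 : ℤ) (p : ℤ) := by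
        rw [Int.isCoprime_iff_gcd_eq_one]
        rw [show (2 : ℤ) = ((2 : ℕ) : ℤ) by norm_num, Int.gcd_natCast_natCast]
        exact hgcd
      obtain ⟨a, b, hab⟩ := hcop2
      refine ⟨a * t, fun R hR hpR => ?_⟩
      have hb : (1 : ℤ) - a * 2 = b * p := by linarith
      have hbK : (1 : 𝓞 K) - (a : 𝓞 K) * 2 = (b : 𝓞 K) * (p : 𝓞 K) := by
        have := congrArg (fun z : ℤ => ((z : ℤ) : 𝓞 K)) hb
        push_cast at this
        linear_combination this
      have heq : (2 : 𝓞 K) * (ω - ((a * t : ℤ) : 𝓞 K))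
          = (2 * ω - (t : 𝓞 K)) + ((t * b : ℤ) : 𝓞 K) * (p : 𝓞 K) := by
        push_cast
        linear_combination (t : 𝓞 K) * hbK
      have h2mem : (2 : 𝓞 K) * (ω - ((a * t : ℤ) : 𝓞 K)) ∈ R := by
        rw [heq]
        exact add_mem (hδ R hR hpR) (R.mul_mem_left _ hpR)
      rcases hR.mem_or_mem h2mem with h | h
      · exfalso
        have : (p : ℤ) ∣ 2 := aux_intmem R hR p hp hpR (z := 2) (by exact_mod_cast h)
        have : p ∣ 2 := by exact_mod_cast this
        have := (Nat.prime_dvd_prime_iff_eq hp Nat.prime_two).mp this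
        exact h2 this
      · exact h
  have key : ∀ R S : Ideal (𝓞 K), R.IsPrime → S.IsPrime → (p : 𝓞 K) ∈ R → (p : 𝓞 K) ∈ S →
      R ≤ S := by
    intro R S hR hS hpR hpS x hx
    obtain ⟨a, b, hab⟩ := hspan x
    have hmem : ((a + b * c : ℤ) : 𝓞 K) ∈ R := by
      have : ((a + b * c : ℤ) : 𝓞 K) = x - (b : 𝓞 K) * (ω - (c : 𝓞 K)) := by
        rw [hab]; push_cast; ring
      rw [this]
      exact sub_mem hx (R.mul_mem_left _ (hc R hR hpR))
    obtain ⟨e, he⟩ := aux_intmem R hR p hp hpR hmem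
    have : x = ((p : ℤ) * e : ℤ) + (b : 𝓞 K) * (ω - (c : 𝓞 K)) := by
      rw [hab, ← he]; push_cast; ring
    rw [this]
    exact add_mem (by
      have : (((p : ℤ) * e : ℤ) : 𝓞 K) = (p : 𝓞 K) * (e : 𝓞 K) := by push_cast; ring
      rw [this]
      exact S.mul_mem_right _ hpS) (S.mul_mem_left _ (hc S hS hpS))
  exact le_antisymm (key P Q hP hQ hpP hpQ) (key Q P hQ hP hpQ hpP)

/-- Every (monoid-)prime ideal of the ring of integers contains a unique rational prime `ℓ`,
and its absolute norm divides `ℓ ^ 2` (in a degree-2 field). -/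
private theorem aux_pf (K : Type*) [Field K] [NumberField K]
    (hrk : Module.finrank ℤ (𝓞 K) = 2)
    (Q : Ideal (𝓞 K)) (hQ : Prime Q) :
    ∃ ℓ : ℕ, ℓ.Prime ∧ (ℓ : 𝓞 K) ∈ Q ∧ absNorm Q ∣ ℓ ^ 2 ∧ ℓ ∣ absNorm Q := by
  classical
  have hQp : Q.IsPrime := Ideal.isPrime_of_prime hQ
  have hQ0 : Q ≠ ⊥ := hQ.ne_zero
  have hN0 : absNorm Q ≠ 0 := by
    rw [Ne, Ideal.absNorm_eq_zero_iff]; exact hQ0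
  set J0 : Ideal ℤ := Q.comap (algebraMap ℤ (𝓞 K)) with hJ0
  have hJ0p : J0.IsPrime := Ideal.IsPrime.comap _
  have hNmem : ((absNorm Q : ℤ) : 𝓞 K) ∈ Q := by
    have := Ideal.absNorm_mem Q
    exact_mod_cast this
  have hNJ0 : (absNorm Q : ℤ) ∈ J0 := by
    rw [hJ0, Ideal.mem_comap]
    exact_mod_cast hNmem
  obtain ⟨g, hg0⟩ := (IsPrincipalIdealRing.principal J0).principal
  have hg : J0 = Ideal.span {g} := hg0
  have hgd : g ∣ (absNorm Q : ℤ) := by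
    have h := hNJ0
    rw [hg, Ideal.mem_span_singleton] at h
    exact h
  have hgne : g ≠ 0 := by
    rintro rfl
    rw [Int.zero_dvd] at hgd
    exact hN0 (by exact_mod_cast hgd)
  have hgprime : Prime g := by
    rw [hg] at hJ0p
    exact (Ideal.span_singleton_prime hgne).mp hJ0p
  have h1 : (g.natAbs : ℤ) ∈ J0 := by
    rw [hg, Ideal.mem_span_singleton]
    exact (Int.dvd_natAbs).mpr dvd_rfl
  have hmemQ : ((g.natAbs : ℤ) : 𝓞 K) ∈ Q := by
    rw [hJ0, Ideal.mem_comap] at h1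
    exact_mod_cast h1
  have hcastabs : ((g.natAbs : ℕ) : 𝓞 K) = ((g.natAbs : ℤ) : 𝓞 K) :=
    (Int.cast_natCast _).symm
  refine ⟨g.natAbs, Int.prime_iff_natAbs_prime.mp hgprime, ?_, ?_, ?_⟩
  · rw [hcastabs]; exact hmemQ
  · -- absNorm Q ∣ ℓ²
    have hle : Ideal.span {((g.natAbs : ℤ) : 𝓞 K)} ≤ Q := by
      rw [Ideal.span_singleton_le_iff_mem]
      exact hmemQ
    have := Ideal.absNorm_dvd_absNorm_of_le hle
    rw [Ideal.absNorm_span_singleton] at this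
    have hnorm : Algebra.norm ℤ (((g.natAbs : ℤ) : 𝓞 K)) = (g.natAbs : ℤ) ^ 2 := by
      have hb : (((g.natAbs : ℤ) : 𝓞 K)) = algebraMap ℤ (𝓞 K) (g.natAbs : ℤ) := by
        simp [algebraMap_int_eq, map_intCast]
      rw [hb, Algebra.norm_algebraMap_of_basis (Module.finBasis ℤ (𝓞 K))]
      rw [Fintype.card_fin, hrk]
    rw [hnorm] at this
    simpa [Int.natAbs_pow] using this
  · have : (g.natAbs : ℤ) ∣ (absNorm Q : ℤ) := (Int.natAbs_dvd).mpr hgd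
    exact_mod_cast this

/-- If `q` is a rational prime such that all primes of `𝓞 K` above `q` coincide, `P` is a
prime ideal above `q`, and `q` divides the norm of a nonzero ideal `J`, then `P ∣ J`. -/
private theorem aux_nv (K : Type*) [Field K] [NumberField K]
    (hrk : Module.finrank ℤ (𝓞 K) = 2)
    (q : ℕ) (hq : q.Prime)
    (hUP : ∀ P Q : Ideal (𝓞 K), P.IsPrime → Q.IsPrime →
      (q : 𝓞 K) ∈ P → (q : 𝓞 K) ∈ Q → P = Q)
    (P : Ideal (𝓞 K)) (hP : P.IsPrime) (hqP : (q : 𝓞 K) ∈ P)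
    (J : Ideal (𝓞 K)) (hJ : J ≠ ⊥) (hdvd : q ∣ absNorm J) : P ∣ J := by
  classical
  have hprod : (normalizedFactors J).prod = J := by
    have h := prod_normalizedFactors hJ
    rwa [associated_iff_eq] at h
  have hnorm : absNorm J = ((normalizedFactors J).map absNorm).prod := by
    conv_lhs => rw [← hprod]
    exact map_multiset_prod _ _
  rw [hnorm] at hdvd
  have hq' : Prime q := hq.prime
  obtain ⟨a, ha, hqa⟩ := hq'.exists_mem_multiset_dvd hdvd
  obtain ⟨Q, hQmem, rfl⟩ := Multiset.mem_map.mp ha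
  have hQprime : Prime Q := prime_of_normalized_factor Q hQmem
  obtain ⟨ℓ, hℓ, hℓQ, hNdvd, _⟩ := aux_pf K hrk Q hQprime
  have hqℓ : q = ℓ := by
    have h1 : q ∣ ℓ ^ 2 := hqa.trans hNdvd
    have h2 : q ∣ ℓ := hq.dvd_of_dvd_pow h1
    exact (Nat.prime_dvd_prime_iff_eq hq hℓ).mp h2
  have hqQ : (q : 𝓞 K) ∈ Q := by rw [hqℓ]; exact hℓQ
  have : P = Q := hUP P Q hP (Ideal.isPrime_of_prime hQprime) hqP hqQ
  rw [this]
  exact dvd_of_mem_normalizedFactors hQmem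

/-- Main divisibility: if every rational prime dividing `absNorm E` has a unique prime
above it, and `absNorm E ∣ absNorm J`, then `E ∣ J`. -/
private theorem aux_divides (K : Type*) [Field K] [NumberField K]
    (hrk : Module.finrank ℤ (𝓞 K) = 2) :
    ∀ N : ℕ, ∀ E J : Ideal (𝓞 K), absNorm E = N → E ≠ ⊥ → J ≠ ⊥ →
      (∀ q : ℕ, q.Prime → q ∣ absNorm E →
        (∀ P Q : Ideal (𝓞 K), P.IsPrime → Q.IsPrime →
          (q : 𝓞 K) ∈ P → (q : 𝓞 K) ∈ Q → P = Q)) →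
      absNorm E ∣ absNorm J → E ∣ J := by
  intro N
  induction N using Nat.strong_induction_on with
  | _ N ih =>
    intro E J hN hE hJ hUP hdvd
    by_cases hEtop : E = ⊤
    · rw [hEtop]; exact ⟨J, by rw [← Ideal.one_eq_top, one_mul]⟩
    -- take a prime factor Q of E
    obtain ⟨Q, hQirr, hQE⟩ := WfDvdMonoid.exists_irreducible_factor
      (by rwa [Ideal.isUnit_iff]) hE
    have hQprime : Prime Q := UniqueFactorizationMonoid.irreducible_iff_prime.mp hQirr
    obtain ⟨ℓ, hℓ, hℓQ, hNQdvd, hℓNQ⟩ := aux_pf K hrk Q hQprime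
    have hNQE : absNorm Q ∣ absNorm E :=
      Ideal.absNorm_dvd_absNorm_of_le (Ideal.le_of_dvd hQE)
    have hℓE : ℓ ∣ absNorm E := hℓNQ.trans hNQE
    have hUPℓ := hUP ℓ hℓ hℓE
    have hℓJ : ℓ ∣ absNorm J := (hℓE.trans hdvd)
    have hQJ : Q ∣ J := aux_nv K hrk ℓ hℓ hUPℓ Q (Ideal.isPrime_of_prime hQprime) hℓQ J hJ hℓJ
    obtain ⟨E', hE'⟩ := hQE
    obtain ⟨J', hJ'⟩ := hQJ
    have hE'0 : E' ≠ ⊥ := by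
      rintro rfl; rw [Ideal.mul_bot] at hE'; exact hE hE'
    have hJ'0 : J' ≠ ⊥ := by
      rintro rfl; rw [Ideal.mul_bot] at hJ'; exact hJ hJ'
    have hQN0 : absNorm Q ≠ 0 := by
      rw [Ne, Ideal.absNorm_eq_zero_iff]; exact hQprime.ne_zero
    have hQN1 : absNorm Q ≠ 1 := by
      rw [Ne, Ideal.absNorm_eq_one_iff]
      intro h
      exact hQprime.not_unit (by rw [Ideal.isUnit_iff]; exact h)
    have hNE : absNorm E = absNorm Q * absNorm E' := by rw [hE', _root_.map_mul]
    have hNJ : absNorm J = absNorm Q * absNorm J' := by rw [hJ', _root_.map_mul]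
    have hdvd' : absNorm E' ∣ absNorm J' := by
      have h := hdvd
      rw [hNE, hNJ] at h
      exact (mul_dvd_mul_iff_left hQN0).mp h
    have hlt : absNorm E' < N := by
      rw [← hN, hNE]
      have h1 : absNorm E' ≠ 0 := by
        rw [Ne, Ideal.absNorm_eq_zero_iff]; exact hE'0
      have h2 : 2 ≤ absNorm Q := by omega
      have h1' : 0 < absNorm E' := Nat.pos_of_ne_zero h1
      calc absNorm E' = 1 * absNorm E' := (one_mul _).symm
        _ < absNorm Q * absNorm E' := by
            exact Nat.mul_lt_mul_of_lt_of_le (by omega) (le_refl _) h1'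
    have hUP' : ∀ q : ℕ, q.Prime → q ∣ absNorm E' →
        (∀ P Q' : Ideal (𝓞 K), P.IsPrime → Q'.IsPrime →
          (q : 𝓞 K) ∈ P → (q : 𝓞 K) ∈ Q' → P = Q') := by
      intro q hq hqd
      exact hUP q hq (hqd.trans ⟨absNorm Q, by rw [hNE]; ring⟩)
    have hE'J' : E' ∣ J' := ih (absNorm E') hlt E' J' rfl hE'0 hJ'0 hUP' hdvd'
    rw [hE', hJ']
    exact mul_dvd_mul_left Q hE'J'

private theorem aux_sqrt {K : Type*} [Field K] [NumberField K]
    (X Y : Ideal (𝓞 K)) (hX : X ≠ ⊥) (hY : Y ≠ ⊥) (h : X * X = Y * Y) : X = Y := by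
  classical
  have hX0 : X ≠ 0 := hX
  have hY0 : Y ≠ 0 := hY
  have hnf : normalizedFactors X + normalizedFactors X
      = normalizedFactors Y + normalizedFactors Y := by
    rw [← normalizedFactors_mul hX0 hX0, ← normalizedFactors_mul hY0 hY0, h]
  have hnf' : normalizedFactors X = normalizedFactors Y := by
    ext a
    have := congrArg (Multiset.count a) hnf
    simp only [Multiset.count_add] at this
    omega
  have h1 : X ∣ Y := (dvd_iff_normalizedFactors_le_normalizedFactors hX0 hY0).mpr (le_of_eq hnf')
  have h2 : Y ∣ X := (dvd_iff_normalizedFactors_le_normalizedFactors hY0 hX0).mpr (le_of_eq hnf'.symm)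
  rw [← associated_iff_eq]
  exact associated_of_dvd_dvd h1 h2


/-- `r_{𝒜,χ}(t) = ∑ χ(𝔞)` over integral ideals `𝔞` in the ideal class `A` of norm `t`. -/
noncomputable def heckeSum {K : Type*} [Field K] [NumberField K]
    (χ : Ideal (𝓞 K) → ℂ) (A : ClassGroup (𝓞 K)) (t : ℕ) : ℂ :=
  ∑ᶠ I ∈ {I : (Ideal (𝓞 K))⁰ |
      Ideal.absNorm (I : Ideal (𝓞 K)) = t ∧ ClassGroup.mk0 I = A},
    χ (I : Ideal (𝓞 K))

/-- For a factorization `D = D₁D₂` of the discriminant into coprime discriminants, with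
`𝒟₁, 𝒟₂` the (2-torsion) ideals of norms `|D₁|, |D₂|`:
`r_{𝒜𝒟₁⁻¹,χ}(j) = χ(𝒟₂)⁻¹ · r_{𝒜,χ}(j·|D₂|)`. -/
theorem stmt18 (K : Type*) [Field K] [NumberField K]
    (h2 : Module.finrank ℚ K = 2)
    (himag : ∀ w : NumberField.InfinitePlace K, w.IsComplex)
    (D D₁ D₂ : ℤ) (hdisc : NumberField.discr K = D) (hD : D < 0)
    (hfac : D = D₁ * D₂) (hcop : IsCoprime D₁ D₂)
    (ι : K →+* ℂ) (ℓ : ℕ)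
    (χ : Ideal (𝓞 K) → ℂ)
    (hmul : ∀ I J : Ideal (𝓞 K), χ (I * J) = χ I * χ J)
    (hne : ∀ I : Ideal (𝓞 K), I ≠ 0 → χ I ≠ 0)
    (hprin : ∀ γ : 𝓞 K, γ ≠ 0 →
      χ (Ideal.span {γ}) = (ι (algebraMap (𝓞 K) K γ)) ^ ℓ)
    (𝒟₁ 𝒟₂ : (Ideal (𝓞 K))⁰)
    (hN₁ : Ideal.absNorm (𝒟₁ : Ideal (𝓞 K)) = D₁.natAbs)
    (hN₂ : Ideal.absNorm (𝒟₂ : Ideal (𝓞 K)) = D₂.natAbs)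
    (htor₁ : (ClassGroup.mk0 𝒟₁) ^ 2 = 1) (htor₂ : (ClassGroup.mk0 𝒟₂) ^ 2 = 1)
    (hsq₁ : (𝒟₁ : Ideal (𝓞 K)) * (𝒟₁ : Ideal (𝓞 K)) = Ideal.span {(D₁ : 𝓞 K)})
    (hsq₂ : (𝒟₂ : Ideal (𝓞 K)) * (𝒟₂ : Ideal (𝓞 K)) = Ideal.span {(D₂ : 𝓞 K)})
    (A : ClassGroup (𝓞 K)) (j : ℕ) (hj : 1 ≤ j) :
    heckeSum χ (A * (ClassGroup.mk0 𝒟₁)⁻¹) j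
      = (χ (𝒟₂ : Ideal (𝓞 K)))⁻¹ * heckeSum χ A (j * D₂.natAbs) := by
    classical
  obtain ⟨ω, t, n, hspan, hω, hDtn⟩ := aux_basis K h2
  have hrk : Module.finrank ℤ (𝓞 K) = 2 := by rw [NumberField.RingOfIntegers.rank, h2]
  have hD0 : D ≠ 0 := ne_of_lt hD
  have hD₂0 : D₂ ≠ 0 := by rintro rfl; rw [mul_zero] at hfac; exact hD0 hfac
  have hDval : D = t ^ 2 + 4 * n := by rw [← hdisc, hDtn]
  have hUPD : ∀ q : ℕ, q.Prime → (q : ℤ) ∣ D →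
      ∀ P Q : Ideal (𝓞 K), P.IsPrime → Q.IsPrime →
        (q : 𝓞 K) ∈ P → (q : 𝓞 K) ∈ Q → P = Q := by
    intro q hq hqD
    exact aux_unique K ω t n hspan hω q hq (by rw [← hDval]; exact hqD)
  have h𝒟₁0 : (𝒟₁ : Ideal (𝓞 K)) ≠ 0 := mem_nonZeroDivisors_iff_ne_zero.mp 𝒟₁.2
  have h𝒟₂0 : (𝒟₂ : Ideal (𝓞 K)) ≠ 0 := mem_nonZeroDivisors_iff_ne_zero.mp 𝒟₂.2
  have hα : (2 * ω - (t : 𝓞 K)) * (2 * ω - (t : 𝓞 K)) = ((D : ℤ) : 𝓞 K) := by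
    rw [hDval]; push_cast; linear_combination (4 : 𝓞 K) * hω
  have hα0 : (2 * ω - (t : 𝓞 K)) ≠ 0 := by
    intro h0
    rw [h0, zero_mul] at hα
    exact hD0 (by exact_mod_cast hα.symm)
  have hprinc : (𝒟₁ : Ideal (𝓞 K)) * (𝒟₂ : Ideal (𝓞 K))
      = Ideal.span {2 * ω - (t : 𝓞 K)} := by
    apply aux_sqrt _ _ (mul_ne_zero h𝒟₁0 h𝒟₂0)
      (by rw [Ne, Ideal.span_singleton_eq_bot]; exact hα0)
    rw [Ideal.span_singleton_mul_span_singleton, hα]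
    calc (𝒟₁ : Ideal (𝓞 K)) * (𝒟₂ : Ideal (𝓞 K)) * ((𝒟₁ : Ideal (𝓞 K)) * (𝒟₂ : Ideal (𝓞 K)))
        = ((𝒟₁ : Ideal (𝓞 K)) * (𝒟₁ : Ideal (𝓞 K)))
          * ((𝒟₂ : Ideal (𝓞 K)) * (𝒟₂ : Ideal (𝓞 K))) := by ring
      _ = Ideal.span {(D₁ : 𝓞 K)} * Ideal.span {(D₂ : 𝓞 K)} := by rw [hsq₁, hsq₂]
      _ = Ideal.span {((D : ℤ) : 𝓞 K)} := by
          rw [Ideal.span_singleton_mul_span_singleton]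
          congr 1
          rw [hfac]
          push_cast
          ring_nf
  have hcls : ClassGroup.mk0 𝒟₁ * ClassGroup.mk0 𝒟₂ = 1 := by
    rw [← MonoidHom.map_mul, ClassGroup.mk0_eq_one_iff]
    exact ⟨⟨2 * ω - (t : 𝓞 K), by rw [Submonoid.coe_mul, hprinc]⟩⟩
  have h𝒟₂eq : ClassGroup.mk0 𝒟₂ = (ClassGroup.mk0 𝒟₁)⁻¹ :=
    eq_inv_of_mul_eq_one_left (by rw [mul_comm]; exact hcls)
  have hinvsq : (ClassGroup.mk0 𝒟₁)⁻¹ * (ClassGroup.mk0 𝒟₁)⁻¹ = 1 := by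
    rw [← mul_inv, ← sq, htor₁, inv_one]
  -- the divisibility fact used for surjectivity
  have hdiv : ∀ J : (Ideal (𝓞 K))⁰, absNorm (J : Ideal (𝓞 K)) = j * D₂.natAbs →
      (𝒟₂ : Ideal (𝓞 K)) ∣ (J : Ideal (𝓞 K)) := by
    intro J hJn
    apply aux_divides K hrk (absNorm (𝒟₂ : Ideal (𝓞 K))) _ _ rfl h𝒟₂0
      (mem_nonZeroDivisors_iff_ne_zero.mp J.2)
    · intro q hq hqd
      apply hUPD q hq
      rw [hN₂] at hqd
      have h1 : (q : ℤ) ∣ (D₂.natAbs : ℤ) := Int.natCast_dvd_natCast.mpr hqd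
      have h2 : ((D₂.natAbs : ℤ)) ∣ D₂ := (Int.natAbs_dvd).mpr dvd_rfl
      have h3 : D₂ ∣ D := ⟨D₁, by rw [hfac]; ring⟩
      exact (h1.trans h2).trans h3
    · rw [hN₂, hJn]
      exact Dvd.intro_left j rfl
  -- the bijection
  have hbij : Set.BijOn (fun I : (Ideal (𝓞 K))⁰ => I * 𝒟₂)
      {I : (Ideal (𝓞 K))⁰ | absNorm (I : Ideal (𝓞 K)) = j
        ∧ ClassGroup.mk0 I = A * (ClassGroup.mk0 𝒟₁)⁻¹}
      {I : (Ideal (𝓞 K))⁰ | absNorm (I : Ideal (𝓞 K)) = j * D₂.natAbs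
        ∧ ClassGroup.mk0 I = A} := by
    refine ⟨?_, ?_, ?_⟩
    · rintro I ⟨hn, hc⟩
      constructor
      · show absNorm ((I : Ideal (𝓞 K)) * (𝒟₂ : Ideal (𝓞 K))) = j * D₂.natAbs
        rw [_root_.map_mul, hn, hN₂]
      · show ClassGroup.mk0 (I * 𝒟₂) = A
        rw [MonoidHom.map_mul, hc, h𝒟₂eq, mul_assoc, hinvsq, mul_one]
    · rintro I ⟨-, -⟩ I' ⟨-, -⟩ h
      apply Subtype.ext
      have h' := congrArg (fun X : (Ideal (𝓞 K))⁰ => (X : Ideal (𝓞 K))) h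
      simp only [Submonoid.coe_mul] at h'
      exact mul_right_cancel₀ h𝒟₂0 h'
    · rintro J ⟨hn, hc⟩
      obtain ⟨C, hC⟩ := hdiv J hn
      have hC0 : C ≠ 0 := by
        rintro rfl
        rw [mul_zero] at hC
        exact (mem_nonZeroDivisors_iff_ne_zero.mp J.2) hC
      refine ⟨⟨C, mem_nonZeroDivisors_iff_ne_zero.mpr hC0⟩, ⟨?_, ?_⟩, ?_⟩
      · show absNorm C = j
        have h1 : absNorm (J : Ideal (𝓞 K)) = D₂.natAbs * absNorm C := by
          rw [hC, _root_.map_mul, hN₂]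
        rw [hn, mul_comm j _] at h1
        have hpos : 0 < D₂.natAbs := Nat.pos_of_ne_zero (Int.natAbs_ne_zero.mpr hD₂0)
        exact (Nat.eq_of_mul_eq_mul_left hpos h1).symm
      · show ClassGroup.mk0 (⟨C, _⟩ : (Ideal (𝓞 K))⁰) = A * (ClassGroup.mk0 𝒟₁)⁻¹
        have hJeq : J = 𝒟₂ * ⟨C, mem_nonZeroDivisors_iff_ne_zero.mpr hC0⟩ :=
          Subtype.ext (by rw [Submonoid.coe_mul]; exact hC)
        rw [hJeq, MonoidHom.map_mul] at hc
        have := eq_inv_mul_of_mul_eq hc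
        rw [this, h𝒟₂eq, inv_inv, mul_comm]
        congr 1
        rw [eq_inv_iff_mul_eq_one, ← sq, htor₁]
      · apply Subtype.ext
        rw [Submonoid.coe_mul]
        show C * (𝒟₂ : Ideal (𝓞 K)) = (J : Ideal (𝓞 K))
        rw [hC, mul_comm]
  have hχ₂ : χ (𝒟₂ : Ideal (𝓞 K)) ≠ 0 := hne _ h𝒟₂0
  have hT : {I : (Ideal (𝓞 K))⁰ | absNorm (I : Ideal (𝓞 K)) = j * D₂.natAbs
      ∧ ClassGroup.mk0 I = A}.Finite := by
    apply Set.Finite.subset (Set.Finite.preimage (Subtype.val_injective.injOn)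
      (Ideal.finite_setOf_absNorm_eq (S := 𝓞 K) (j * D₂.natAbs)))
    rintro I ⟨hn, -⟩
    exact hn
  have hLHS : heckeSum χ (A * (ClassGroup.mk0 𝒟₁)⁻¹) j
      = ∑ᶠ J ∈ {I : (Ideal (𝓞 K))⁰ | absNorm (I : Ideal (𝓞 K)) = j * D₂.natAbs
          ∧ ClassGroup.mk0 I = A}, (χ (𝒟₂ : Ideal (𝓞 K)))⁻¹ * χ (J : Ideal (𝓞 K)) := by
    rw [heckeSum]
    refine finsum_mem_eq_of_bijOn _ hbij ?_
    intro I hI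
    rw [Submonoid.coe_mul, hmul, mul_comm (χ (I : Ideal (𝓞 K))), ← mul_assoc,
      inv_mul_cancel₀ hχ₂, one_mul]
  rw [hLHS, heckeSum, ← hT.coe_toFinset, finsum_mem_coe_finset, finsum_mem_coe_finset,
    Finset.mul_sum]
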